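/- arXiv:1812.03930 — 3 statements merged into one kernel-verified Lean document; each statement's English description precedes it below -/
import Mathlib

section
/- If n is odd, then any two transverse maximal isotropic n-planes in ℝ^{n,n} have opposite sign τ; if n is even, then any two transverse maximal isotropic n-planes have the same sign τ. -/
noncomputable def bform (n : ℕ) (x y : Fin (n+n) → ℝ) : ℝ :=
  ∑ i : Fin (n+n), (if (i : ℕ) < n then x i * y i else -(x i * y i))

noncomputable def tauMat (n : ℕ) (v v' : Fin n → Fin (n+n) → ℝ) :
    Matrix (Fin (n+n)) (Fin (n+n)) ℝ :=
  Matrix.of fun i j => Fin.append v (fun k => v' (Fin.rev k)) j i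

namespace TauAux

open Matrix

def eps (n : ℕ) (i : Fin (n+n)) : ℝ := if (i : ℕ) < n then 1 else -1

noncomputable def Jmat (n : ℕ) : Matrix (Fin (n+n)) (Fin (n+n)) ℝ :=
  Matrix.diagonal (eps n)

noncomputable def revMat (m : ℕ) : Matrix (Fin m) (Fin m) ℝ :=
  Matrix.of fun i j => if i = Fin.rev j then 1 else 0

variable {n m : ℕ}

lemma bform_expand (x y : Fin (n+n) → ℝ) :
    bform n x y = ∑ i, eps n i * x i * y i := by
  unfold bform eps
  refine Finset.sum_congr rfl fun i _ => by split_ifs <;> ring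

lemma bform_symm (x y : Fin (n+n) → ℝ) : bform n x y = bform n y x := by
  simp only [bform_expand]
  exact Finset.sum_congr rfl fun i _ => by ring

lemma revMat_mul_revMat : revMat m * revMat m = 1 := by
  ext i j
  rw [Matrix.mul_apply, Finset.sum_eq_single (Fin.rev j)]
  · simp [revMat, Matrix.one_apply, Fin.rev_rev, eq_comm]
  · intro k _ hk; simp [revMat, hk]
  · simp

lemma det_revMat_mul_self : (revMat m).det * (revMat m).det = 1 := by
  rw [← Matrix.det_mul, revMat_mul_revMat, Matrix.det_one]

lemma det_swap_blocks :
    (Matrix.fromBlocks (0 : Matrix (Fin n) (Fin n) ℝ) 1 1 (0 : Matrix (Fin n) (Fin n) ℝ)).det = (-1 : ℝ)^n := by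
  set P : Matrix (Fin n ⊕ Fin n) (Fin n ⊕ Fin n) ℝ := Matrix.fromBlocks 1 1 1 (-1) with hP
  set D : Matrix (Fin n ⊕ Fin n) (Fin n ⊕ Fin n) ℝ := Matrix.fromBlocks 1 0 0 (-1) with hD
  have hSP : Matrix.fromBlocks (0 : Matrix (Fin n) (Fin n) ℝ) 1 1 (0 : Matrix (Fin n) (Fin n) ℝ) * P = P * D := by
    simp [hP, hD, Matrix.fromBlocks_multiply]
  have htwo : ((1 : Matrix (Fin n) (Fin n) ℝ) + 1) = (2:ℝ) • 1 := by
    ext i j; simp [Matrix.one_apply]; split_ifs <;> norm_num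
  have hPP : P * P = Matrix.fromBlocks ((2:ℝ) • 1) 0 0 ((2:ℝ) • 1) := by
    simp [hP, Matrix.fromBlocks_multiply, htwo]
  have hdetP : P.det ≠ 0 := by
    intro h0
    have : (P * P).det = 0 := by rw [Matrix.det_mul, h0, zero_mul]
    rw [hPP, Matrix.det_fromBlocks_zero₂₁, Matrix.det_smul] at this
    simp at this
  have hdetD : D.det = (-1:ℝ)^n := by
    rw [hD, Matrix.det_fromBlocks_zero₂₁, Matrix.det_one, one_mul]
    have : (-1 : Matrix (Fin n) (Fin n) ℝ) = -(1) := by simp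
    rw [this, Matrix.det_neg, Matrix.det_one, Fintype.card_fin, mul_one]
  have h := congrArg Matrix.det hSP
  rw [Matrix.det_mul, Matrix.det_mul, mul_comm P.det D.det] at h
  exact (mul_right_cancel₀ hdetP h).trans hdetD

lemma rev_castAdd'' (k : Fin n) :
    Fin.rev (Fin.castAdd n k) = Fin.natAdd n (Fin.rev k) := by
  have hk := k.isLt
  apply Fin.ext
  simp [Fin.val_rev]
  omega

lemma rev_natAdd'' (k : Fin n) :
    Fin.rev (Fin.natAdd n k) = Fin.castAdd n (Fin.rev k) := by
  have hk := k.isLt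
  apply Fin.ext
  simp [Fin.val_rev]
  omega

/-- Replace the determinant of a `(n+n)×(n+n)` matrix by the determinant of its block form. -/
lemma det_eq_det_blocks (M : Matrix (Fin (n+n)) (Fin (n+n)) ℝ)
    (A B C D : Matrix (Fin n) (Fin n) ℝ)
    (hA : ∀ i j, M (Fin.castAdd n i) (Fin.castAdd n j) = A i j)
    (hB : ∀ i j, M (Fin.castAdd n i) (Fin.natAdd n j) = B i j)
    (hC : ∀ i j, M (Fin.natAdd n i) (Fin.castAdd n j) = C i j)
    (hD : ∀ i j, M (Fin.natAdd n i) (Fin.natAdd n j) = D i j) :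
    M.det = (Matrix.fromBlocks A B C D).det := by
  rw [← Matrix.det_submatrix_equiv_self finSumFinEquiv M]
  congr 1
  ext i j
  cases i with
  | inl i => cases j with
    | inl j => simpa using hA i j
    | inr j => simpa using hB i j
  | inr i => cases j with
    | inl j => simpa using hC i j
    | inr j => simpa using hD i j

lemma det_blocks_RRB (B : Matrix (Fin n) (Fin n) ℝ) :
    (Matrix.fromBlocks (0 : Matrix (Fin n) (Fin n) ℝ) (revMat n) (revMat n) B).det
      = (-1 : ℝ)^n := by
  have h : Matrix.fromBlocks (0 : Matrix (Fin n) (Fin n) ℝ) (revMat n) (revMat n) B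
      = Matrix.fromBlocks (revMat n) 0 B (revMat n) *
        Matrix.fromBlocks (0 : Matrix (Fin n) (Fin n) ℝ) 1 1 (0 : Matrix (Fin n) (Fin n) ℝ) := by
    simp [Matrix.fromBlocks_multiply]
  rw [h, Matrix.det_mul, det_swap_blocks, Matrix.det_fromBlocks_zero₁₂,
    det_revMat_mul_self, one_mul]

lemma det_Jmat : (Jmat n).det = (-1 : ℝ)^n := by
  rw [Jmat, Matrix.det_diagonal, ← Equiv.prod_comp finSumFinEquiv (eps n), Fintype.prod_sum_type]
  have h1 : ∀ i : Fin n, eps n (Fin.castAdd n i) = 1 := by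
    intro i; simp [eps]
  have h2 : ∀ i : Fin n, eps n (Fin.addNat i n) = -1 := by
    intro i; simp [eps]
  simp [h1, h2, finSumFinEquiv_apply_left, finSumFinEquiv_apply_right]

lemma gram_entry (M N : Matrix (Fin (n+n)) (Fin (n+n)) ℝ) (j k : Fin (n+n)) :
    (Mᵀ * Jmat n * N) j k = bform n (fun i => M i j) (fun i => N i k) := by
  rw [Matrix.mul_assoc, bform_expand, Matrix.mul_apply]
  refine Finset.sum_congr rfl fun i _ => ?_
  rw [Jmat, Matrix.diagonal_mul, Matrix.transpose_apply]
  ring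

lemma gram_entry' (M N : Matrix (Fin (n+n)) (Fin (n+n)) ℝ) (i j : Fin (n+n)) :
    (M * Jmat n * Nᵀ) i j = bform n (M i) (N j) := by
  rw [bform_expand, Matrix.mul_apply]
  refine Finset.sum_congr rfl fun t _ => ?_
  rw [Jmat, Matrix.mul_diagonal, Matrix.transpose_apply]
  ring

lemma bform_sum_right (x : Fin (n+n) → ℝ) (c : Fin n → ℝ) (y : Fin n → Fin (n+n) → ℝ) :
    bform n x (fun t => ∑ k, c k * y k t) = ∑ k, c k * bform n x (y k) := by
  simp only [bform_expand, Finset.mul_sum]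
  rw [Finset.sum_comm]
  refine Finset.sum_congr rfl fun k _ => ?_
  refine Finset.sum_congr rfl fun t _ => by ring

lemma bform_sum_left (x : Fin (n+n) → ℝ) (c : Fin n → ℝ) (y : Fin n → Fin (n+n) → ℝ) :
    bform n (fun t => ∑ k, c k * y k t) x = ∑ k, c k * bform n (y k) x := by
  rw [bform_symm, bform_sum_right]
  exact Finset.sum_congr rfl fun k _ => by rw [bform_symm]

lemma polarize (H : Submodule ℝ (Fin (n+n) → ℝ)) (hiso : ∀ z ∈ H, bform n z z = 0)
    {x y : Fin (n+n) → ℝ} (hx : x ∈ H) (hy : y ∈ H) : bform n x y = 0 := by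
  have h1 := hiso x hx
  have h2 := hiso y hy
  have h3 := hiso (x + y) (H.add_mem hx hy)
  have e1 : bform n (x + y) (x + y)
      = bform n x x + bform n y y + (bform n x y + bform n x y) := by
    simp only [bform_expand]
    rw [← Finset.sum_add_distrib, ← Finset.sum_add_distrib, ← Finset.sum_add_distrib]
    refine Finset.sum_congr rfl fun i _ => ?_
    simp only [Pi.add_apply]
    ring
  rw [h1, h2, h3] at e1
  linarith

/-- The key pairing identity. -/
lemma det_tauMat_pair (x y z : Fin n → Fin (n+n) → ℝ)
    (hxx : ∀ i j, bform n (x i) (x j) = 0)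
    (hxy : ∀ i j, bform n (x i) (y j) = if i = j then 1 else 0)
    (hxz : ∀ i j, bform n (x i) (z j) = if i = j then 1 else 0) :
    (tauMat n x y).det * (-1 : ℝ)^n * (tauMat n x z).det = (-1 : ℝ)^n := by
  have key : ((tauMat n x y)ᵀ * Jmat n * tauMat n x z).det = (-1 : ℝ)^n := by
    rw [det_eq_det_blocks _ 0 (revMat n) (revMat n)
      (Matrix.of fun i j => bform n (y (Fin.rev i)) (z (Fin.rev j))) ?_ ?_ ?_ ?_]
    · exact det_blocks_RRB _
    · intro i j
      rw [gram_entry]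
      show bform n (Fin.append x (fun k => y (Fin.rev k)) (Fin.castAdd n i))
        (Fin.append x (fun k => z (Fin.rev k)) (Fin.castAdd n j)) = _
      rw [Fin.append_left, Fin.append_left, hxx]
      rfl
    · intro i j
      rw [gram_entry]
      show bform n (Fin.append x (fun k => y (Fin.rev k)) (Fin.castAdd n i))
        (Fin.append x (fun k => z (Fin.rev k)) (Fin.natAdd n j)) = _
      rw [Fin.append_left, Fin.append_right, hxz]
      rfl
    · intro i j
      rw [gram_entry]
      show bform n (Fin.append x (fun k => y (Fin.rev k)) (Fin.natAdd n i))
        (Fin.append x (fun k => z (Fin.rev k)) (Fin.castAdd n j)) = _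
      rw [Fin.append_right, Fin.append_left, bform_symm, hxy]
      show _ = revMat n i j
      simp only [revMat, Matrix.of_apply]
      by_cases h : i = Fin.rev j
      · subst h; simp [Fin.rev_rev]
      · have h' : ¬ (j = Fin.rev i) := fun hc => h (by rw [hc, Fin.rev_rev])
        rw [if_neg h', if_neg h]
    · intro i j
      rw [gram_entry]
      show bform n (Fin.append x (fun k => y (Fin.rev k)) (Fin.natAdd n i))
        (Fin.append x (fun k => z (Fin.rev k)) (Fin.natAdd n j)) = _
      rw [Fin.append_right, Fin.append_right]
      rfl
  rw [Matrix.det_mul, Matrix.det_mul, Matrix.det_transpose, det_Jmat] at key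
  exact key

lemma tauMat_swap (x y : Fin n → Fin (n+n) → ℝ) :
    tauMat n y x = tauMat n x y * revMat (n+n) := by
  ext i j
  rw [Matrix.mul_apply, Finset.sum_eq_single (Fin.rev j)]
  · rw [revMat, Matrix.of_apply, if_pos rfl, mul_one]
    show Fin.append y (fun k => x (Fin.rev k)) j i
      = Fin.append x (fun k => y (Fin.rev k)) (Fin.rev j) i
    refine congrFun ?_ i
    induction j using Fin.addCases with
    | left k => rw [Fin.append_left, rev_castAdd'', Fin.append_right, Fin.rev_rev]
    | right k => rw [Fin.append_right, rev_natAdd'', Fin.append_left]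
  · intro k _ hk
    rw [revMat, Matrix.of_apply, if_neg hk, mul_zero]
  · simp

lemma det_revMat_double : (revMat (n+n)).det = (-1 : ℝ)^n := by
  rw [det_eq_det_blocks (revMat (n+n)) 0 (revMat n) (revMat n) 0 ?_ ?_ ?_ ?_]
  · exact det_blocks_RRB 0
  · intro i j
    rw [revMat, Matrix.of_apply, rev_castAdd'', if_neg]
    · rfl
    · intro hc
      have := congrArg Fin.val hc
      simp [Fin.val_rev] at this
      have := i.isLt; have hj := (Fin.rev j).isLt
      omega
  · intro i j
    rw [revMat, Matrix.of_apply, rev_natAdd'']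
    show _ = revMat n i j
    rw [revMat, Matrix.of_apply]
    by_cases h : i = Fin.rev j
    · rw [if_pos h, if_pos (by rw [h])]
    · rw [if_neg h, if_neg (fun hc => h (Fin.ext (by simpa using congrArg Fin.val hc)))]
  · intro i j
    rw [revMat, Matrix.of_apply, rev_castAdd'']
    show _ = revMat n i j
    rw [revMat, Matrix.of_apply]
    by_cases h : i = Fin.rev j
    · rw [if_pos h, if_pos (by rw [h])]
    · rw [if_neg h, if_neg (fun hc => h (Fin.ext (by simpa using congrArg Fin.val hc)))]
  · intro i j
    rw [revMat, Matrix.of_apply, rev_natAdd'', if_neg]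
    · rfl
    · intro hc
      have := congrArg Fin.val hc
      simp [Fin.val_rev] at this
      have := (Fin.rev j).isLt
      omega

lemma det_tauMat_transform (w w' : Fin n → Fin (n+n) → ℝ) (C D : Matrix (Fin n) (Fin n) ℝ)
    (hCD : C.det * D.det = 1) :
    (tauMat n (fun i t => ∑ j, C i j * w j t) (fun i t => ∑ j, D i j * w' j t)).det
      = (tauMat n w w').det := by
  set Q' : Matrix (Fin n ⊕ Fin n) (Fin n ⊕ Fin n) ℝ :=
    Matrix.fromBlocks Cᵀ 0 0 (Matrix.of fun i j => D (Fin.rev j) (Fin.rev i)) with hQ'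
  have hQ : tauMat n (fun i t => ∑ j, C i j * w j t) (fun i t => ∑ j, D i j * w' j t)
      = tauMat n w w' * (Q'.submatrix finSumFinEquiv.symm finSumFinEquiv.symm) := by
    ext i j
    rw [Matrix.mul_apply, ← Equiv.sum_comp finSumFinEquiv
      (fun k => tauMat n w w' i k * Q'.submatrix finSumFinEquiv.symm finSumFinEquiv.symm k j)]
    simp only [Matrix.submatrix_apply, Equiv.symm_apply_apply]
    rw [Fintype.sum_sum_type]
    induction j using Fin.addCases with
    | left a =>
      rw [finSumFinEquiv_symm_apply_castAdd]
      have hz : ∀ b : Fin n, tauMat n w w' i (finSumFinEquiv (Sum.inr b))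
          * Q' (Sum.inr b) (Sum.inl a) = 0 := by
        intro b; simp [hQ', Matrix.fromBlocks]
      simp only [hz, Finset.sum_const_zero, add_zero]
      show Fin.append (fun i t => ∑ j, C i j * w j t)
          (fun k => (fun i t => ∑ j, D i j * w' j t) (Fin.rev k)) (Fin.castAdd n a) i = _
      rw [Fin.append_left]
      refine Finset.sum_congr rfl fun b _ => ?_
      rw [finSumFinEquiv_apply_left]
      show C a b * w b i = Fin.append w (fun k => w' (Fin.rev k)) (Fin.castAdd n b) i
        * Q' (Sum.inl b) (Sum.inl a)
      rw [Fin.append_left]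
      simp [hQ', Matrix.fromBlocks]
      ring
    | right a =>
      rw [finSumFinEquiv_symm_apply_natAdd]
      have hz : ∀ b : Fin n, tauMat n w w' i (finSumFinEquiv (Sum.inl b))
          * Q' (Sum.inl b) (Sum.inr a) = 0 := by
        intro b; simp [hQ', Matrix.fromBlocks]
      simp only [hz, Finset.sum_const_zero, zero_add]
      show Fin.append (fun i t => ∑ j, C i j * w j t)
          (fun k => (fun i t => ∑ j, D i j * w' j t) (Fin.rev k)) (Fin.natAdd n a) i = _
      rw [Fin.append_right]
      show (∑ l : Fin n, D (Fin.rev a) l * w' l i) = _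
      rw [← Equiv.sum_comp Fin.revPerm
        (fun l => D (Fin.rev a) l * w' l i)]
      refine Finset.sum_congr rfl fun b _ => ?_
      rw [finSumFinEquiv_apply_right]
      show D (Fin.rev a) (Fin.revPerm b) * w' (Fin.revPerm b) i
        = Fin.append w (fun k => w' (Fin.rev k)) (Fin.natAdd n b) i * Q' (Sum.inr b) (Sum.inr a)
      rw [Fin.append_right]
      simp [hQ', Matrix.fromBlocks]
      ring
  rw [hQ, Matrix.det_mul, Matrix.det_submatrix_equiv_self, hQ',
    Matrix.det_fromBlocks_zero₁₂, Matrix.det_transpose]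
  have hX : (Matrix.of fun i j => D (Fin.rev j) (Fin.rev i)).det = D.det := by
    have h1 : (Matrix.of fun i j => D (Fin.rev j) (Fin.rev i))
        = (D.submatrix (Fin.revPerm : Fin n ≃ Fin n) (Fin.revPerm : Fin n ≃ Fin n))ᵀ := by
      ext i j; simp [Matrix.submatrix_apply]
    rw [h1, Matrix.det_transpose, Matrix.det_submatrix_equiv_self]
  rw [hX, hCD, mul_one]

lemma det_of_li {m : ℕ} (f : Fin m → Fin m → ℝ) (hli : LinearIndependent ℝ f) :
    (Matrix.of f).det ≠ 0 := by
  rcases Nat.eq_zero_or_pos m with hm | hm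
  · subst hm
    simp [Matrix.det_isEmpty]
  · haveI : Nonempty (Fin m) := ⟨⟨0, hm⟩⟩
    have hcard : Fintype.card (Fin m) = Module.finrank ℝ (Fin m → ℝ) := by
      rw [Module.finrank_fintype_fun_eq_card]
    let b := basisOfLinearIndependentOfCardEqFinrank hli hcard
    have hb : ⇑b = f := coe_basisOfLinearIndependentOfCardEqFinrank hli hcard
    haveI := (Pi.basisFun ℝ (Fin m)).invertibleToMatrix b
    have hunit : IsUnit ((Pi.basisFun ℝ (Fin m)).toMatrix ⇑b).det :=
      Matrix.isUnit_det_of_invertible _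
    have heq : (Pi.basisFun ℝ (Fin m)).toMatrix ⇑b = (Matrix.of f)ᵀ := by
      ext i j
      rw [Module.Basis.toMatrix_apply, Pi.basisFun_repr, hb]
      rfl
    rw [heq, Matrix.det_transpose] at hunit
    exact isUnit_iff_ne_zero.mp hunit

lemma det_gram_ne_zero (v w : Fin n → Fin (n+n) → ℝ)
    (hli : LinearIndependent ℝ (Fin.append v w))
    (hvv : ∀ i j, bform n (v i) (v j) = 0) (hww : ∀ i j, bform n (w i) (w j) = 0) :
    (Matrix.of fun i j => bform n (v i) (w j)).det ≠ 0 := by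
  set S : Matrix (Fin (n+n)) (Fin (n+n)) ℝ := Matrix.of (Fin.append v w) with hSdef
  set G : Matrix (Fin n) (Fin n) ℝ := Matrix.of fun i j => bform n (v i) (w j) with hGdef
  have hS : S.det ≠ 0 := det_of_li _ hli
  have hkey : (S * Jmat n * Sᵀ).det = G.det * G.det * (-1:ℝ)^n := by
    rw [det_eq_det_blocks _ 0 G Gᵀ 0 ?_ ?_ ?_ ?_]
    · have h : Matrix.fromBlocks (0 : Matrix (Fin n) (Fin n) ℝ) G Gᵀ 0
          = Matrix.fromBlocks G 0 0 Gᵀ *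
            Matrix.fromBlocks (0 : Matrix (Fin n) (Fin n) ℝ) 1 1 (0 : Matrix (Fin n) (Fin n) ℝ) := by
        simp [Matrix.fromBlocks_multiply]
      rw [h, Matrix.det_mul, det_swap_blocks, Matrix.det_fromBlocks_zero₁₂,
        Matrix.det_transpose]
    · intro i j
      rw [gram_entry']
      show bform n (Fin.append v w (Fin.castAdd n i)) (Fin.append v w (Fin.castAdd n j)) = _
      rw [Fin.append_left, Fin.append_left, hvv]
      rfl
    · intro i j
      rw [gram_entry']
      show bform n (Fin.append v w (Fin.castAdd n i)) (Fin.append v w (Fin.natAdd n j)) = _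
      rw [Fin.append_left, Fin.append_right]
      rfl
    · intro i j
      rw [gram_entry']
      show bform n (Fin.append v w (Fin.natAdd n i)) (Fin.append v w (Fin.castAdd n j)) = _
      rw [Fin.append_right, Fin.append_left, bform_symm]
      rfl
    · intro i j
      rw [gram_entry']
      show bform n (Fin.append v w (Fin.natAdd n i)) (Fin.append v w (Fin.natAdd n j)) = _
      rw [Fin.append_right, Fin.append_right, hww]
      rfl
  rw [Matrix.det_mul, Matrix.det_mul, det_Jmat, Matrix.det_transpose] at hkey
  intro h0
  rw [h0] at hkey
  have hne : S.det * (-1:ℝ)^n * S.det ≠ 0 :=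
    mul_ne_zero (mul_ne_zero hS (pow_ne_zero _ (by norm_num))) hS
  exact hne (by rw [hkey]; ring)

end TauAux

open TauAux Matrix in
/-- if `n` is odd, two transverse maximal isotropic `n`-planes in `ℝ^{n,n}`
have opposite sign `τ`; if `n` is even they have the same sign.  The sign of each plane is
computed as the determinant of the column matrix of any basis together with its canonical
dual isotropic family. -/
theorem tau_of_transverse_isotropic_planes (n : ℕ)
    (H₁ H₂ : Submodule ℝ (Fin (n+n) → ℝ))
    (h1iso : ∀ x ∈ H₁, bform n x x = 0) (h1dim : Module.finrank ℝ H₁ = n)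
    (h2iso : ∀ x ∈ H₂, bform n x x = 0) (h2dim : Module.finrank ℝ H₂ = n)
    (htrans : H₁ ⊓ H₂ = ⊥)
    (v w v' w' : Fin n → Fin (n+n) → ℝ)
    (hvli : LinearIndependent ℝ v) (hvsp : Submodule.span ℝ (Set.range v) = H₁)
    (hwli : LinearIndependent ℝ w) (hwsp : Submodule.span ℝ (Set.range w) = H₂)
    (hv'iso : ∀ x ∈ Submodule.span ℝ (Set.range v'), bform n x x = 0)
    (hvv' : ∀ i j, bform n (v i) (v' j) = if i = j then 1 else 0)
    (hw'iso : ∀ x ∈ Submodule.span ℝ (Set.range w'), bform n x x = 0)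
    (hww' : ∀ i j, bform n (w i) (w' j) = if i = j then 1 else 0) :
    (Odd n → (tauMat n v v').det = -(tauMat n w w').det) ∧
      (Even n → (tauMat n v v').det = (tauMat n w w').det) := by
  classical
  have hvH : ∀ i, v i ∈ H₁ := fun i => hvsp ▸ Submodule.subset_span (Set.mem_range_self i)
  have hwH : ∀ i, w i ∈ H₂ := fun i => hwsp ▸ Submodule.subset_span (Set.mem_range_self i)
  have hvv : ∀ i j, bform n (v i) (v j) = 0 := fun i j => polarize H₁ h1iso (hvH i) (hvH j)
  have hww : ∀ i j, bform n (w i) (w j) = 0 := fun i j => polarize H₂ h2iso (hwH i) (hwH j)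
  have hdisj : Disjoint (Submodule.span ℝ (Set.range v)) (Submodule.span ℝ (Set.range w)) := by
    rw [hvsp, hwsp]
    exact disjoint_iff.mpr htrans
  have hli : LinearIndependent ℝ (Fin.append v w) := by
    have h1 : LinearIndependent ℝ (Sum.elim v w) := hvli.sum_type hwli hdisj
    have h2 : Fin.append v w = Sum.elim v w ∘ finSumFinEquiv.symm := by
      funext j
      induction j using Fin.addCases with
      | left k =>
        rw [Fin.append_left]
        simp only [Function.comp_apply, finSumFinEquiv_symm_apply_castAdd, Sum.elim_inl]
      | right k =>
        rw [Fin.append_right]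
        simp only [Function.comp_apply, finSumFinEquiv_symm_apply_natAdd, Sum.elim_inr]
    rw [h2]
    exact h1.comp _ finSumFinEquiv.symm.injective
  set G : Matrix (Fin n) (Fin n) ℝ := Matrix.of fun i j => bform n (v i) (w j) with hGdef
  have hG : G.det ≠ 0 := det_gram_ne_zero v w hli hvv hww
  set C : Matrix (Fin n) (Fin n) ℝ := (Gᵀ)⁻¹ with hCdef
  set u : Fin n → Fin (n+n) → ℝ := fun i t => ∑ j, C i j * w j t with hudef
  set z : Fin n → Fin (n+n) → ℝ := fun i t => ∑ j, G i j * w' j t with hzdef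
  have hGC : G * Cᵀ = 1 := by
    rw [hCdef, Matrix.transpose_nonsing_inv, Matrix.transpose_transpose]
    exact Matrix.mul_nonsing_inv _ (isUnit_iff_ne_zero.mpr hG)
  have hvu : ∀ i j, bform n (v i) (u j) = if i = j then 1 else 0 := by
    intro i j
    have h1 : bform n (v i) (u j) = ∑ k, C j k * bform n (v i) (w k) :=
      bform_sum_right (v i) (fun k => C j k) w
    rw [h1]
    have h2 : ∑ k, C j k * bform n (v i) (w k) = (G * Cᵀ) i j := by
      rw [Matrix.mul_apply]
      exact Finset.sum_congr rfl fun k _ => by rw [Matrix.transpose_apply]; exact mul_comm _ _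
    rw [h2, hGC, Matrix.one_apply]
  have huH : ∀ i, u i ∈ H₂ := by
    intro i
    have h : u i = ∑ j, C i j • w j := by
      funext t
      simp [hudef, Finset.sum_apply]
    rw [h]
    exact Submodule.sum_mem _ fun j _ => Submodule.smul_mem _ _ (hwH j)
  have huu : ∀ i j, bform n (u i) (u j) = 0 := fun i j => polarize H₂ h2iso (huH i) (huH j)
  have huw' : ∀ i l, bform n (u i) (w' l) = C i l := by
    intro i l
    have h1 : bform n (u i) (w' l) = ∑ k, C i k * bform n (w k) (w' l) :=
      bform_sum_left (w' l) (fun k => C i k) w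
    rw [h1]
    simp [hww', mul_ite]
  have huz : ∀ i j, bform n (u i) (z j) = if i = j then 1 else 0 := by
    intro i j
    have h1 : bform n (u i) (z j) = ∑ l, G j l * bform n (u i) (w' l) :=
      bform_sum_right (u i) (fun l => G j l) w'
    rw [h1]
    have h2 : ∑ l, G j l * bform n (u i) (w' l) = (G * Cᵀ) j i := by
      rw [Matrix.mul_apply]
      refine Finset.sum_congr rfl fun l _ => by rw [huw', Matrix.transpose_apply]
    rw [h2, hGC, Matrix.one_apply]
    by_cases h : i = j
    · simp [h]
    · rw [if_neg (show ¬ j = i from fun hc => h hc.symm), if_neg h]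
  have huv : ∀ i j, bform n (u i) (v j) = if i = j then 1 else 0 := by
    intro i j
    rw [bform_symm, hvu]
    by_cases h : i = j
    · simp [h]
    · rw [if_neg (show ¬ j = i from fun hc => h hc.symm), if_neg h]
  -- the four determinants
  have h1 : (tauMat n v v').det * (-1:ℝ)^n * (tauMat n v u).det = (-1:ℝ)^n :=
    det_tauMat_pair v v' u hvv hvv' hvu
  have h2 : (tauMat n u v).det * (-1:ℝ)^n * (tauMat n u z).det = (-1:ℝ)^n :=
    det_tauMat_pair u v z huu huv huz
  have h3 : (tauMat n u v).det = (tauMat n v u).det * (-1:ℝ)^n := by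
    rw [tauMat_swap v u, Matrix.det_mul, det_revMat_double]
  have h4 : (tauMat n u z).det = (tauMat n w w').det := by
    have hdet1 : C.det * G.det = 1 := by
      rw [hCdef, Matrix.det_nonsing_inv, Matrix.det_transpose, Ring.inverse_eq_inv']
      exact inv_mul_cancel₀ hG
    exact det_tauMat_transform w w' C G hdet1
  set a := (tauMat n v v').det with ha'
  set b := (tauMat n v u).det with hb'
  set d := (tauMat n w w').det with hd'
  rw [h3, h4] at h2
  have hme : ((-1:ℝ)^n) ≠ 0 := pow_ne_zero _ (by norm_num)
  have hsq : ((-1:ℝ)^n) * ((-1:ℝ)^n) = 1 := by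
    rw [← mul_pow]
    norm_num
  have hab : a * b = 1 := by
    have h : (a * b) * ((-1:ℝ)^n) = 1 * ((-1:ℝ)^n) := by linear_combination h1
    exact mul_right_cancel₀ hme h
  have hbd : b * d = (-1:ℝ)^n := by
    have h2x : (b * d) * ((-1:ℝ)^n * (-1:ℝ)^n) = (-1:ℝ)^n := by linear_combination h2
    rw [hsq, mul_one] at h2x
    exact h2x
  have had : a * ((-1:ℝ)^n) = d := by
    calc a * ((-1:ℝ)^n) = a * (b * d) := by rw [hbd]
    _ = (a * b) * d := by ring
    _ = d := by rw [hab, one_mul]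
  have ha : a = d * ((-1:ℝ)^n) := by
    calc a = a * (((-1:ℝ)^n) * ((-1:ℝ)^n)) := by rw [hsq, mul_one]
    _ = (a * ((-1:ℝ)^n)) * ((-1:ℝ)^n) := by ring
    _ = d * ((-1:ℝ)^n) := by rw [had]
  constructor
  · intro hodd
    rw [ha, Odd.neg_one_pow hodd]
    ring
  · intro heven
    rw [ha, Even.neg_one_pow heven, mul_one]
end

section
/- Let g be an affine isometry of ℝ^{n,n−1} whose linear part A has 1 as a simple eigenvalue with spacelike eigenvector f₀ and all other eigenvalue moduli ≠ 1. If the Margulis invariant α(g) = ⟨v, f₀⟩ ≠ 0 (where v is the translational part), then the cyclic group ⟨g⟩ acts properly discontinuously on ℝ^{2n−1}. -/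
/-- The standard symmetric bilinear form of signature `(n,n-1)` on `ℝ^{2n-1}`. -/
noncomputable def cform (n : ℕ) (x y : Fin (2*n - 1) → ℝ) : ℝ :=
  ∑ i : Fin (2*n - 1), (if (i : ℕ) < n then x i * y i else -(x i * y i))

lemma cform_add_left (n : ℕ) (x y z : Fin (2*n - 1) → ℝ) :
    cform n (x + y) z = cform n x z + cform n y z := by
  unfold cform
  rw [← Finset.sum_add_distrib]
  apply Finset.sum_congr rfl
  intro i _
  by_cases h : (i : ℕ) < n <;> simp [h, Pi.add_apply] <;> ring

lemma cform_continuous (n : ℕ) (z : Fin (2*n - 1) → ℝ) :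
    Continuous fun x => cform n x z := by
  unfold cform
  apply continuous_finset_sum
  intro i _
  by_cases h : (i : ℕ) < n
  · simp only [if_pos h]
    exact (continuous_apply i).mul continuous_const
  · simp only [if_neg h]
    exact ((continuous_apply i).mul continuous_const).neg

/-- if the Margulis invariant `α(g) = ⟨v, f₀⟩` of an affine isometry
`g : x ↦ A x + v` of `ℝ^{n,n-1}` (with `A ∈ SO(n,n-1)` having `1` as a simple eigenvalue
with spacelike eigenvector `f₀` and all other real eigenvalue moduli `≠ 1`) is nonzero,
then the cyclic group generated by `g` acts properly discontinuously on `ℝ^{2n-1}`. -/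
theorem nonzero_margulis_invariant_implies_proper (n : ℕ) (hn : 1 ≤ n)
    (A : (Fin (2*n - 1) → ℝ) ≃ₗ[ℝ] (Fin (2*n - 1) → ℝ)) (v f0 : Fin (2*n - 1) → ℝ)
    (hiso : ∀ x y, cform n (A x) (A y) = cform n x y)
    (hdet : LinearMap.det A.toLinearMap = 1)
    (hf0 : A f0 = f0) (hf0ne : f0 ≠ 0) (hspace : 0 < cform n f0 f0)
    (hker : ∀ x, A x = x → x ∈ Submodule.span ℝ ({f0} : Set (Fin (2*n - 1) → ℝ)))
    (heig : ∀ (c : ℝ) (x : Fin (2*n - 1) → ℝ), x ≠ 0 → A x = c • x → c = 1 ∨ |c| ≠ 1)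
    (halpha : cform n v f0 ≠ 0) :
    ∀ K : Set (Fin (2*n - 1) → ℝ), IsCompact K →
      {k : ℤ | ∃ x ∈ K, ((A.toEquiv.trans (Equiv.addRight v)) ^ k) x ∈ K}.Finite := by
  intro K hK
  set g : Equiv.Perm (Fin (2*n - 1) → ℝ) := A.toEquiv.trans (Equiv.addRight v) with hgdef
  set φ : (Fin (2*n - 1) → ℝ) → ℝ := fun x => cform n x f0 with hφdef
  set α : ℝ := cform n v f0 with hαdef
  have hg : ∀ x, g x = A x + v := fun x => rfl
  -- one step
  have step : ∀ x, φ (g x) = φ x + α := by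
    intro x
    have : φ (g x) = cform n (A x) f0 + α := by
      rw [hg x]; exact cform_add_left n (A x) v f0
    rw [this]
    congr 1
    calc cform n (A x) f0 = cform n (A x) (A f0) := by rw [hf0]
      _ = cform n x f0 := hiso x f0
  have stepinv : ∀ x, φ (g⁻¹ x) = φ x - α := by
    intro x
    have := step (g⁻¹ x)
    rw [show g (g⁻¹ x) = x from g.apply_symm_apply x] at this
    linarith
  -- zpow
  have key : ∀ (k : ℤ) (x : Fin (2*n - 1) → ℝ), φ ((g ^ k) x) = φ x + k * α := by
    intro k
    induction k using Int.induction_on with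
    | zero => intro x; simp
    | succ k ih =>
        intro x
        have h1 : (g ^ ((k : ℤ) + 1)) x = (g ^ (k : ℤ)) (g x) := by
          rw [zpow_add_one]; rfl
        rw [h1, ih (g x), step x]
        push_cast; ring
    | pred k ih =>
        intro x
        have h1 : (g ^ (-(k : ℤ) - 1)) x = (g ^ (-(k : ℤ))) (g⁻¹ x) := by
          rw [zpow_sub_one]; rfl
        rw [h1, ih (g⁻¹ x), stepinv x]
        push_cast; ring
  -- bound φ on K
  obtain ⟨C, hC⟩ : ∃ C, ∀ x ∈ K, ‖φ x‖ ≤ C := by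
    rcases K.eq_empty_or_nonempty with h | h
    · exact ⟨0, by simp [h]⟩
    · exact hK.exists_bound_of_continuousOn ((cform_continuous n f0).continuousOn)
  set m : ℤ := ⌈2 * C / |α|⌉ with hm
  apply Set.Finite.subset (Set.finite_Icc (-m) m)
  rintro k ⟨x, hx, hgx⟩
  have h1 : φ ((g ^ k) x) = φ x + k * α := key k x
  have h2 : |φ x| ≤ C := hC x hx
  have h3 : |φ ((g ^ k) x)| ≤ C := hC _ hgx
  have h4 : |(k : ℝ) * α| ≤ 2 * C := by
    have : (k : ℝ) * α = φ ((g ^ k) x) - φ x := by linarith [h1]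
    rw [this]
    calc |φ ((g ^ k) x) - φ x| ≤ |φ ((g ^ k) x)| + |φ x| := abs_sub _ _
      _ ≤ 2 * C := by linarith
  have hαpos : 0 < |α| := abs_pos.mpr halpha
  have h5 : |(k : ℝ)| ≤ 2 * C / |α| := by
    rw [abs_mul] at h4
    rw [le_div_iff₀ hαpos]
    exact h4
  have h6 : |(k : ℝ)| ≤ (m : ℝ) := h5.trans (Int.le_ceil _)
  have h7 : |k| ≤ m := by
    have : ((|k| : ℤ) : ℝ) ≤ (m : ℝ) := by push_cast; exact h6
    exact_mod_cast this
  exact Set.mem_Icc.mpr (abs_le.mp h7)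
end

section
/- Let c_r be the linear map of ℝ^{2n} scaling the first 2n−1 coordinates by 1/r and fixing the last. If g_r is a differentiable path in SO(n,n) (block form with (2n−1)×(2n−1) block A_r, column v_r, row w_rᵀ, scalar b_r) with g₀ the image of h ∈ SO(n,n−1) (so A₀ = h, v₀ = 0, w₀ = 0, b₀ = 1), then c_r g_r c_r^{−1} converges as r → 0 to the affine transformation with linear part h and translational part u = (d/dr)|_{r=0} v_r. -/
/-- The block matrix `g_r = [[A_r, v_r],[w_rᵀ, b_r]]`. -/
noncomputable def Gmat (n : ℕ) (A : ℝ → Matrix (Fin (2*n - 1)) (Fin (2*n - 1)) ℝ)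
    (vv w : ℝ → Fin (2*n - 1) → ℝ) (b : ℝ → ℝ) (r : ℝ) :
    Matrix (Fin (2*n - 1) ⊕ Unit) (Fin (2*n - 1) ⊕ Unit) ℝ :=
  Matrix.fromBlocks (A r) (Matrix.of fun i (_ : Unit) => vv r i)
    (Matrix.of fun (_ : Unit) j => w r j) (Matrix.of fun _ _ => b r)

/-- The rescaling `c_r`, scaling the first `2n-1` coordinates by `1/r`. -/
noncomputable def cmat (n : ℕ) (r : ℝ) :
    Matrix (Fin (2*n - 1) ⊕ Unit) (Fin (2*n - 1) ⊕ Unit) ℝ :=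
  Matrix.fromBlocks (r⁻¹ • (1 : Matrix (Fin (2*n - 1)) (Fin (2*n - 1)) ℝ)) 0 0
    (1 : Matrix Unit Unit ℝ)

/-- The inverse rescaling `c_r⁻¹`. -/
noncomputable def cmatInv (n : ℕ) (r : ℝ) :
    Matrix (Fin (2*n - 1) ⊕ Unit) (Fin (2*n - 1) ⊕ Unit) ℝ :=
  Matrix.fromBlocks (r • (1 : Matrix (Fin (2*n - 1)) (Fin (2*n - 1)) ℝ)) 0 0
    (1 : Matrix Unit Unit ℝ)

/-- The form of signature `(n,n-1)` on the first block. -/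
noncomputable def Jmat (n : ℕ) : Matrix (Fin (2*n - 1)) (Fin (2*n - 1)) ℝ :=
  Matrix.diagonal fun i => if (i : ℕ) < n then (1 : ℝ) else -1

/-- The block-diagonal form of signature `(n,n)` on `ℝ^{2n} = ℝ^{2n-1} ⊕ ℝ^{0,1}`. -/
noncomputable def Qmat (n : ℕ) : Matrix (Fin (2*n - 1) ⊕ Unit) (Fin (2*n - 1) ⊕ Unit) ℝ :=
  Matrix.fromBlocks (Jmat n) 0 0 (Matrix.of fun _ _ => (-1 : ℝ))

lemma conj_eq (n : ℕ) (A : ℝ → Matrix (Fin (2*n - 1)) (Fin (2*n - 1)) ℝ)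
    (vv w : ℝ → Fin (2*n - 1) → ℝ) (b : ℝ → ℝ) {r : ℝ} (hr : r ≠ 0) :
    cmat n r * Gmat n A vv w b r * cmatInv n r =
      Matrix.fromBlocks (A r) (r⁻¹ • Matrix.of fun i (_ : Unit) => vv r i)
        (r • Matrix.of fun (_ : Unit) j => w r j) (Matrix.of fun _ _ => b r) := by
  simp [cmat, cmatInv, Gmat, Matrix.fromBlocks_multiply, Matrix.smul_mul, Matrix.mul_smul,
    smul_smul, inv_mul_cancel₀ hr, mul_inv_cancel₀ hr]

/-- if `g_r` is a differentiable path in `SO(n,n)` with `g₀` the image of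
`h ∈ SO(n,n-1)`, then `c_r g_r c_r⁻¹` converges entrywise, as `r → 0⁺`, to the affine
transformation `[[h, u],[0,1]]` where `u = (d/dr)|₀ v_r`. -/
theorem conjugated_path_converges_to_affine (n : ℕ) (hn : 1 ≤ n)
    (A : ℝ → Matrix (Fin (2*n - 1)) (Fin (2*n - 1)) ℝ)
    (vv w : ℝ → Fin (2*n - 1) → ℝ) (b : ℝ → ℝ)
    (h : Matrix (Fin (2*n - 1)) (Fin (2*n - 1)) ℝ) (u : Fin (2*n - 1) → ℝ)
    (hA0 : A 0 = h) (hv0 : vv 0 = 0) (hw0 : w 0 = 0) (hb0 : b 0 = 1)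
    (hSOh : h.transpose * Jmat n * h = Jmat n ∧ h.det = 1)
    (hSO : ∀ r : ℝ,
      (Gmat n A vv w b r).transpose * Qmat n * Gmat n A vv w b r = Qmat n ∧
        (Gmat n A vv w b r).det = 1)
    (hAdiff : ∀ i j, DifferentiableAt ℝ (fun r => A r i j) 0)
    (hvder : ∀ i, HasDerivAt (fun r => vv r i) (u i) 0)
    (hwdiff : ∀ j, DifferentiableAt ℝ (fun r => w r j) 0)
    (hbdiff : DifferentiableAt ℝ b 0) :
    ∀ i j, Filter.Tendsto
      (fun r => (cmat n r * Gmat n A vv w b r * cmatInv n r) i j)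
      (nhdsWithin 0 (Set.Ioi 0))
      (nhds ((Matrix.fromBlocks h (Matrix.of fun i (_ : Unit) => u i) 0
        (1 : Matrix Unit Unit ℝ)) i j)) := by
  have hmem : ∀ᶠ r in nhdsWithin (0:ℝ) (Set.Ioi 0), r ≠ 0 := by
    filter_upwards [self_mem_nhdsWithin] with r hr
    exact ne_of_gt hr
  have hle : nhdsWithin (0:ℝ) (Set.Ioi 0) ≤ nhdsWithin 0 {(0:ℝ)}ᶜ :=
    nhdsWithin_mono 0 (fun x hx => ne_of_gt hx)
  intro i j
  rcases i with i | i <;> rcases j with j | j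
  · -- A block
    have heq : (fun r => A r i j) =ᶠ[nhdsWithin (0:ℝ) (Set.Ioi 0)]
        fun r => (cmat n r * Gmat n A vv w b r * cmatInv n r) (Sum.inl i) (Sum.inl j) := by
      filter_upwards [hmem] with r hr
      rw [conj_eq n A vv w b hr]; simp
    simp only [Matrix.fromBlocks_apply₁₁]
    have ht := (hAdiff i j).continuousAt.tendsto
    rw [hA0] at ht
    exact (ht.mono_left nhdsWithin_le_nhds).congr' heq
  · -- v block
    have heq : (fun r => r⁻¹ * vv r i) =ᶠ[nhdsWithin (0:ℝ) (Set.Ioi 0)]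
        fun r => (cmat n r * Gmat n A vv w b r * cmatInv n r) (Sum.inl i) (Sum.inr j) := by
      filter_upwards [hmem] with r hr
      rw [conj_eq n A vv w b hr]; simp
    simp only [Matrix.fromBlocks_apply₁₂, Matrix.of_apply]
    have ht := (hasDerivAt_iff_tendsto_slope.mp (hvder i)).mono_left hle
    have ht2 : Filter.Tendsto (fun r => r⁻¹ * vv r i) (nhdsWithin (0:ℝ) (Set.Ioi 0)) (nhds (u i)) := by
      refine ht.congr fun r => ?_
      simp [slope, hv0]
    exact ht2.congr' heq
  · -- w block
    have heq : (fun r => r * w r j) =ᶠ[nhdsWithin (0:ℝ) (Set.Ioi 0)]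
        fun r => (cmat n r * Gmat n A vv w b r * cmatInv n r) (Sum.inr i) (Sum.inl j) := by
      filter_upwards [hmem] with r hr
      rw [conj_eq n A vv w b hr]; simp
    simp only [Matrix.fromBlocks_apply₂₁, Matrix.zero_apply]
    have h1 : Filter.Tendsto (fun r : ℝ => r * w r j) (nhds 0) (nhds (0 * w 0 j)) :=
      (continuousAt_id).tendsto.mul (hwdiff j).continuousAt.tendsto
    rw [zero_mul] at h1
    exact (h1.mono_left nhdsWithin_le_nhds).congr' heq
  · -- b block
    have heq : (fun r => b r) =ᶠ[nhdsWithin (0:ℝ) (Set.Ioi 0)]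
        fun r => (cmat n r * Gmat n A vv w b r * cmatInv n r) (Sum.inr i) (Sum.inr j) := by
      filter_upwards [hmem] with r hr
      rw [conj_eq n A vv w b hr]; simp
    simp only [Matrix.fromBlocks_apply₂₂, Matrix.of_apply]
    have ht := hbdiff.continuousAt.tendsto
    rw [hb0] at ht
    have : ((1 : Matrix Unit Unit ℝ) i j) = 1 := by simp [Matrix.one_apply]
    rw [this]
    exact (ht.mono_left nhdsWithin_le_nhds).congr' heq
end
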